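/- Let A be an R-order, A₀ a hereditary overring of A, and 𝔠 = Ann_R(A₀/A). Then for any A-lattices M, N, every homomorphism in 𝔠²·Hom_A(M, N) factors through a projective A-module; i.e., 𝔠² annihilates the stable Hom group Hom_A(M,N)/P(M,N). -/
import Mathlib


open CategoryTheory Opposite TensorProduct Function

noncomputable section

variable (R : Type) [CommRing R] [IsLocalRing R]
variable (A : Type) [Ring A] [Algebra R A]

/-- `A` is an `R`-order: (with the ambient finiteness/torsion-free instances)
`A` is torsion-free over `R` and semiprime. -/
def IsROrder : Prop :=
  (∀ r ∈ nonZeroDivisors R, ∀ a : A, r • a = 0 → a = 0) ∧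
  (∀ a : A, (∀ x : A, a * x * a = 0) → a = 0)

/-- An object of `ModuleCat A` is an `A`-lattice. -/
def IsLatticeCat (M : ModuleCat.{0} A) : Prop :=
  Module.Finite A M ∧
    ∀ r ∈ nonZeroDivisors R, ∀ m : M, (algebraMap R A r) • m = 0 → m = 0

/-- A plain module is an `A`-lattice. -/
def IsLatticeMod (M : Type) [AddCommGroup M] [Module R M] [Module A M]
    [IsScalarTower R A M] : Prop :=
  Module.Finite A M ∧ ∀ r ∈ nonZeroDivisors R, ∀ m : M, r • m = 0 → m = 0

/-- Vanishing of `Ext^n_A(M,N)`. -/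
def extZero (n : ℕ) (M N : ModuleCat.{0} A) : Prop :=
  Subsingleton (((Ext ℤ (ModuleCat.{0} A) n).obj (op M)).obj N)

/-- L-injective lattice: `Ext¹_A(M, I) = 0` for all lattices `M`. -/
def IsLInjective (I : ModuleCat.{0} A) : Prop :=
  ∀ M : ModuleCat.{0} A, IsLatticeCat R A M → extZero A 1 M I

/-- Indecomposable module. -/
def Indecomp (M : Type) [AddCommGroup M] [Module A M] : Prop :=
  Nontrivial M ∧ ∀ f : M →ₗ[A] M, f ∘ₗ f = f → f = 0 ∨ f = LinearMap.id

/-- Radical of a module: intersection of the maximal submodules. -/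
def radSub (M : Type) [AddCommGroup M] [Module A M] : Submodule A M :=
  sInf {N : Submodule A M | IsCoatom N}

/-- Connectedness: no nontrivial central idempotents. -/
def IsConnectedRing : Prop :=
  ∀ e : A, e * e = e → (∀ x : A, e * x = x * e) → e = 0 ∨ e = 1

/-- Hereditary order: every `A`-lattice is projective. -/
def IsHereditaryOrder : Prop :=
  ∀ (M : Type) [AddCommGroup M] [Module R M] [Module A M] [IsScalarTower R A M],
    IsLatticeMod R A M → Module.Projective A M

/-- Gorenstein: `A` is L-injective as a left `A`-lattice. -/
def IsGorensteinOrder : Prop := IsLInjective R A (ModuleCat.of A A)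

/-- The canonical embedding of a lattice `B` into `B ⊗ K`, `K` the total fraction ring. -/
def embK (B : Type) [AddCommGroup B] [Module R B] [Module A B] [IsScalarTower R A B]
    [SMulCommClass R A B] : B →ₗ[A] B ⊗[R] (FractionRing R) where
  toFun b := b ⊗ₜ (1 : FractionRing R)
  map_add' x y := TensorProduct.add_tmul x y 1
  map_smul' a b := (TensorProduct.smul_tmul' a b 1).symm

variable (B : Type) [AddCommGroup B] [Module R B] [Module A B] [IsScalarTower R A B]
    [SMulCommClass R A B]

/-- `B` viewed inside `B ⊗ K`. -/
def B0 : Submodule A (B ⊗[R] (FractionRing R)) := LinearMap.range (embK R A B)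

/-- `B^𝔯`: the sum of `B` and all of its minimal overmodules inside `B ⊗ K`. -/
def upperB : Submodule A (B ⊗[R] (FractionRing R)) :=
  B0 R A B ⊔ sSup {N : Submodule A (B ⊗[R] (FractionRing R)) | B0 R A B ⋖ N}

end

section Statements

variable (R : Type) [CommRing R] [IsNoetherianRing R] [IsLocalRing R] [IsReduced R]
  [IsAdicComplete (IsLocalRing.maximalIdeal R) R]
variable (A : Type) [Ring A] [Algebra R A] [Module.Finite R A]

/-- If `A₀` is a hereditary overring of `A` and
`𝔠 = Ann_R(A₀/A)`, then for `c, c' ∈ 𝔠` every map `(c·c')•f : M → N` of `A`-lattices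
factors through a finitely generated projective `A`-module. -/
theorem conductor_sq_kills_stable_hom
    (hdim : ringKrullDim R = 1) (hord : IsROrder R A)
    (A₀ : Type) [Ring A₀] [Algebra R A₀] [Module.Finite R A₀]
    (ρ : A →ₐ[R] A₀) (hρ : Function.Injective ρ)
    (hover : ∀ x : A₀, ∃ r ∈ nonZeroDivisors R, ∃ a : A, r • x = ρ a)
    (hher : ∀ (X : Type) [AddCommGroup X] [Module R X] [Module A₀ X]
      [IsScalarTower R A₀ X], IsLatticeMod R A₀ X → Module.Projective A₀ X)
    (M N : Type) [AddCommGroup M] [Module R M] [Module A M] [IsScalarTower R A M]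
    [AddCommGroup N] [Module R N] [Module A N] [IsScalarTower R A N]
    (hMlat : IsLatticeMod R A M) (hNlat : IsLatticeMod R A N)
    (c c' : R) (hc : ∀ x : A₀, ∃ a : A, c • x = ρ a) (hc' : ∀ x : A₀, ∃ a : A, c' • x = ρ a)
    (f : M →ₗ[A] N) :
    ∃ (P : Type) (_ : AddCommGroup P) (_ : Module A P),
      Module.Projective A P ∧ Module.Finite A P ∧
      ∃ (g : M →ₗ[A] P) (h : P →ₗ[A] N), ∀ x : M, h (g x) = (c * c') • f x := by
  classical
  obtain ⟨hNfin, hNtf⟩ := hNlat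
  haveI hCommN : SMulCommClass R A N := ⟨fun r a n => by
    rw [← algebraMap_smul A r n, ← algebraMap_smul A r (a • n), smul_smul, smul_smul,
      Algebra.commutes]⟩
  choose χ hχ using hc
  choose χ' hχ' using hc'
  -- basic properties of χ and χ'
  have hχ_add : ∀ x y : A₀, χ (x + y) = χ x + χ y := by
    intro x y; apply hρ; rw [map_add, ← hχ, ← hχ, ← hχ, smul_add]
  have hχ_mul : ∀ (a : A) (x : A₀), χ (ρ a * x) = a * χ x := by
    intro a x; apply hρ; rw [map_mul, ← hχ, ← hχ, mul_smul_comm]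
  have hχ'_add : ∀ x y : A₀, χ' (x + y) = χ' x + χ' y := by
    intro x y; apply hρ; rw [map_add, ← hχ', ← hχ', ← hχ', smul_add]
  have hχ'_smul : ∀ (r : R) (x : A₀), χ' (r • x) = r • χ' x := by
    intro r x; apply hρ; rw [map_smul, ← hχ', ← hχ', smul_comm]
  have hχ'_rmul : ∀ (a : A) (x : A₀), χ' (ρ a * x) = a * χ' x := by
    intro a x; apply hρ; rw [map_mul, ← hχ', ← hχ', mul_smul_comm]
  have hχ'_mulr : ∀ (x : A₀) (a : A), χ' (x * ρ a) = χ' x * a := by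
    intro x a; apply hρ; rw [map_mul, ← hχ', ← hχ', smul_mul_assoc]
  have hχ'_one : χ' 1 = algebraMap R A c' := by
    apply hρ; rw [← hχ', AlgHom.commutes, Algebra.algebraMap_eq_smul_one]
  -- the auxiliary big module Y = A₀ ⊗[R] N
  let bil : A₀ →ₗ[R] N →ₗ[R] N := LinearMap.mk₂ R (fun x n => χ' x • n)
    (fun x y n => show χ' (x + y) • n = χ' x • n + χ' y • n by rw [hχ'_add, add_smul])
    (fun r x n => show χ' (r • x) • n = r • (χ' x • n) by rw [hχ'_smul, smul_assoc])
    (fun x n n' => smul_add _ _ _)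
    (fun r x n => (smul_comm r _ n).symm)
  let βh : A₀ ⊗[R] N →ₗ[R] N := TensorProduct.lift bil
  have hβh_tmul : ∀ (x : A₀) (n : N), βh (x ⊗ₜ[R] n) = χ' x • n := fun x n => rfl
  have hβh_rho : ∀ (a : A) (y : A₀ ⊗[R] N), βh ((ρ a) • y) = a • βh y := by
    intro a y
    induction y using TensorProduct.induction_on with
    | zero => simp
    | tmul x n =>
        rw [TensorProduct.smul_tmul', smul_eq_mul, hβh_tmul, hβh_tmul, hχ'_rmul, mul_smul]
    | add y z hy hz => rw [smul_add, map_add, hy, hz, map_add, smul_add]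
  -- the relation submodule
  let S : Set (A₀ ⊗[R] N) :=
    {y | ∃ (x : A₀) (a : A) (n : N), y = (x * ρ a) ⊗ₜ[R] n - x ⊗ₜ[R] (a • n)}
  let Wrel : Submodule A₀ (A₀ ⊗[R] N) := Submodule.span A₀ S
  let T : Submodule A₀ (A₀ ⊗[R] N) :=
  { carrier := {y | ∀ a₀ : A₀, βh (a₀ • y) = 0}
    add_mem' := fun {y} {z} hy hz a₀ => by rw [smul_add, map_add, hy a₀, hz a₀, add_zero]
    zero_mem' := fun a₀ => by rw [smul_zero, map_zero]
    smul_mem' := fun b {y} hy a₀ => by rw [smul_smul]; exact hy (a₀ * b) }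
  have hST : S ⊆ (T : Set (A₀ ⊗[R] N)) := by
    rintro y ⟨x, a, n, rfl⟩ a₀
    rw [smul_sub, map_sub, TensorProduct.smul_tmul', TensorProduct.smul_tmul',
      smul_eq_mul, smul_eq_mul, hβh_tmul, hβh_tmul, ← mul_assoc, hχ'_mulr, mul_smul,
      sub_self]
  have hβh_Wrel : ∀ y ∈ Wrel, βh y = 0 := by
    intro y hy
    have := (Submodule.span_le.mpr hST) hy (1 : A₀)
    rwa [one_smul] at this
  have hWrel_smulR : ∀ (t : R), ∀ w ∈ Wrel, t • w ∈ Wrel := by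
    intro t w hw
    rw [← algebraMap_smul A₀ t w]
    exact Wrel.smul_mem _ hw
  have hcomm : ∀ (t : R) (a₀ : A₀) (v : A₀ ⊗[R] N), t • a₀ • v = a₀ • t • v := by
    intro t a₀ v
    rw [← algebraMap_smul A₀ t (a₀ • v), ← algebraMap_smul A₀ t v, smul_smul, smul_smul,
      Algebra.commutes]
  -- saturation of Wrel
  let W : Submodule A₀ (A₀ ⊗[R] N) :=
  { carrier := {v | ∃ r ∈ nonZeroDivisors R, r • v ∈ Wrel}
    add_mem' := by
      rintro v u ⟨r, hr, hv⟩ ⟨t, ht, hu⟩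
      refine ⟨r * t, mul_mem hr ht, ?_⟩
      rw [smul_add]
      refine add_mem ?_ ?_
      · have e : (r * t) • v = t • r • v := by rw [← mul_smul, mul_comm]
        rw [e]; exact hWrel_smulR t _ hv
      · have e : (r * t) • u = r • t • u := by rw [← mul_smul]
        rw [e]; exact hWrel_smulR r _ hu
    zero_mem' := ⟨1, one_mem _, by rw [smul_zero]; exact zero_mem _⟩
    smul_mem' := by
      rintro a₀ v ⟨r, hr, hv⟩
      exact ⟨r, hr, by rw [hcomm]; exact Wrel.smul_mem a₀ hv⟩ }
  have hWrelW : Wrel ≤ W := fun v hv => ⟨1, one_mem _, by rwa [one_smul]⟩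
  have hβh_W : ∀ v ∈ W, βh v = 0 := by
    rintro v ⟨r, hr, hv⟩
    have h1 : r • βh v = 0 := by rw [← map_smul, hβh_Wrel _ hv]
    exact hNtf r hr _ h1
  -- the A₀-lattice X
  haveI : Module.Finite R N := Module.Finite.trans A N
  haveI : Module.Finite A₀ (A₀ ⊗[R] N) := inferInstance
  haveI hXfin : Module.Finite A₀ ((A₀ ⊗[R] N) ⧸ W) :=
    Module.Finite.of_surjective W.mkQ (Submodule.mkQ_surjective W)
  have hXtf : ∀ r ∈ nonZeroDivisors R, ∀ x : (A₀ ⊗[R] N) ⧸ W, r • x = 0 → x = 0 := by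
    intro r hr x hx
    obtain ⟨y, rfl⟩ := Submodule.Quotient.mk_surjective W x
    rw [← Submodule.Quotient.mk_smul, Submodule.Quotient.mk_eq_zero] at hx
    obtain ⟨t, ht, h1⟩ := hx
    rw [Submodule.Quotient.mk_eq_zero]
    exact ⟨t * r, mul_mem ht hr, by rwa [mul_smul]⟩
  haveI hXproj : Module.Projective A₀ ((A₀ ⊗[R] N) ⧸ W) :=
    hher _ ⟨hXfin, hXtf⟩
  obtain ⟨k, q, hq⟩ := Module.Finite.exists_fin' A₀ ((A₀ ⊗[R] N) ⧸ W)
  obtain ⟨s, hs⟩ := Module.projective_lifting_property q LinearMap.id hq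
  have hqs : ∀ x, q (s x) = x := fun x => by
    have := LinearMap.congr_fun hs x
    simpa using this
  -- β on the quotient
  let βX : ((A₀ ⊗[R] N) ⧸ W) → N := fun x => βh (Quotient.out x)
  have hβX_mk : ∀ y : A₀ ⊗[R] N, βX (Submodule.Quotient.mk y) = βh y := by
    intro y
    have h1 : (Submodule.Quotient.mk (Quotient.out ((Submodule.Quotient.mk y : (A₀ ⊗[R] N) ⧸ W)))
        : (A₀ ⊗[R] N) ⧸ W) = Submodule.Quotient.mk y := Quotient.out_eq _
    have h2 := (Submodule.Quotient.eq W).mp h1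
    have h3 := hβh_W _ h2
    rw [map_sub, sub_eq_zero] at h3
    exact h3
  have hβX_add : ∀ x x', βX (x + x') = βX x + βX x' := by
    intro x x'
    obtain ⟨y, rfl⟩ := Submodule.Quotient.mk_surjective W x
    obtain ⟨y', rfl⟩ := Submodule.Quotient.mk_surjective W x'
    rw [← Submodule.Quotient.mk_add W, hβX_mk, hβX_mk, hβX_mk, map_add]
  have hβX_rho : ∀ (a : A) (x : (A₀ ⊗[R] N) ⧸ W), βX ((ρ a) • x) = a • βX x := by
    intro a x
    obtain ⟨y, rfl⟩ := Submodule.Quotient.mk_surjective W x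
    rw [← Submodule.Quotient.mk_smul W (ρ a) y, hβX_mk, hβX_mk, hβh_rho]
  -- α into the quotient and the map u
  let u : N → (Fin k → A₀) :=
    fun n => s (Submodule.Quotient.mk ((1 : A₀) ⊗ₜ[R] n))
  have hu_add : ∀ n n', u (n + n') = u n + u n' := by
    intro n n'
    show s (Submodule.Quotient.mk ((1 : A₀) ⊗ₜ[R] (n + n'))) = _
    rw [TensorProduct.tmul_add, Submodule.Quotient.mk_add W, map_add]
  have hu_smul : ∀ (a : A) (n : N), u (a • n) = (ρ a) • u n := by
    intro a n
    have h1 : (Submodule.Quotient.mk ((1 : A₀) ⊗ₜ[R] (a • n)) : (A₀ ⊗[R] N) ⧸ W) =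
        (ρ a) • Submodule.Quotient.mk ((1 : A₀) ⊗ₜ[R] n) := by
      rw [← Submodule.Quotient.mk_smul W (ρ a)]
      apply (Submodule.Quotient.eq W).mpr
      apply hWrelW
      rw [TensorProduct.smul_tmul', smul_eq_mul, mul_one]
      have e : (1 : A₀) ⊗ₜ[R] (a • n) - (ρ a) ⊗ₜ[R] n =
          -(((1 : A₀) * ρ a) ⊗ₜ[R] n - (1 : A₀) ⊗ₜ[R] (a • n)) := by
        rw [one_mul, neg_sub]
      rw [e]
      exact neg_mem (Submodule.subset_span ⟨1, a, n, rfl⟩)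
    show s (Submodule.Quotient.mk ((1 : A₀) ⊗ₜ[R] (a • n))) = _
    rw [h1, map_smul]
  -- g and h
  let g : M →ₗ[A] (Fin k → A) :=
  { toFun := fun m i => χ (u (f m) i)
    map_add' := by
      intro m m'; funext i
      simp only [map_add, hu_add, Pi.add_apply, hχ_add]
    map_smul' := by
      intro a m; funext i
      simp only [map_smul, hu_smul, Pi.smul_apply, smul_eq_mul, hχ_mul, RingHom.id_apply] }
  let h : (Fin k → A) →ₗ[A] N :=
  { toFun := fun v => βX (q (fun i => ρ (v i)))
    map_add' := by
      intro v w
      have h1 : (fun i => ρ ((v + w) i)) = (fun i => ρ (v i)) + (fun i => ρ (w i)) := by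
        funext i; simp [map_add]
      show βX (q (fun i => ρ ((v + w) i))) = _
      rw [h1, map_add, hβX_add]
    map_smul' := by
      intro a v
      have h1 : (fun i => ρ ((a • v) i)) = (ρ a) • (fun i => ρ (v i)) := by
        funext i; simp [map_mul, smul_eq_mul]
      show βX (q (fun i => ρ ((a • v) i))) = _
      rw [h1, map_smul, hβX_rho]
      rfl }
  refine ⟨Fin k → A, inferInstance, inferInstance, inferInstance, inferInstance, g, h, ?_⟩
  intro m
  show βX (q (fun i => ρ (χ (u (f m) i)))) = (c * c') • f m
  have h1 : (fun i => ρ (χ (u (f m) i))) = c • u (f m) := by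
    funext i; rw [Pi.smul_apply, ← hχ]
  rw [h1, ← algebraMap_smul A₀ c (u (f m)), map_smul, ← (ρ.commutes c), hβX_rho, hqs]
  show (algebraMap R A c) • βX (Submodule.Quotient.mk ((1 : A₀) ⊗ₜ[R] (f m))) = (c * c') • f m
  rw [hβX_mk, hβh_tmul, hχ'_one, algebraMap_smul, algebraMap_smul, smul_smul]

end Statements
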